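/- For every real number x with −12 < x < 0 one has |2 + x + x²/12| < 2. Consequently, if λ < 0 and k > 0 are real numbers with k² · (−λ) < 12, then every sequence (v_n)_{n ≥ 0} of real numbers satisfying the recurrence v_{n+1} = (2 + k² λ + k⁴ λ²/12) v_n − v_{n−1} for all n ≥ 1 is bounded. -/
import Mathlib


/-- Stability of the explicit fourth-order two-step time-integration scheme:
for `−12 < x < 0` one has `|2 + x + x²/12| < 2`, and consequently the scalar
recurrence `v_{n+1} = (2 + k²λ + k⁴λ²/12) v_n − v_{n−1}` is bounded whenever
`λ < 0`, `k > 0` and `k²(−λ) < 12`. -/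
theorem time_stepping_stability :
    (∀ x : ℝ, -12 < x → x < 0 → |2 + x + x ^ 2 / 12| < 2) ∧
    (∀ (lam k : ℝ) (v : ℕ → ℝ), lam < 0 → 0 < k → k ^ 2 * (-lam) < 12 →
      (∀ n : ℕ, 1 ≤ n →
        v (n + 1) = (2 + k ^ 2 * lam + k ^ 4 * lam ^ 2 / 12) * v n - v (n - 1)) →
      ∃ C : ℝ, ∀ n : ℕ, |v n| ≤ C) := by
  constructor
  · intro x hx1 hx2
    rw [abs_lt]
    constructor
    · nlinarith [sq_nonneg (x + 6)]
    · nlinarith [mul_pos (by linarith : (0:ℝ) < 12 + x) (by linarith : (0:ℝ) < -x)]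
  · intro lam k v hlam hk h12 hrec
    set a : ℝ := 2 + k ^ 2 * lam + k ^ 4 * lam ^ 2 / 12 with ha
    have hksq : 0 < k ^ 2 := by positivity
    have hx2 : k ^ 2 * lam < 0 := mul_neg_of_pos_of_neg hksq hlam
    have hx1 : -12 < k ^ 2 * lam := by nlinarith
    have hk4 : k ^ 4 * lam ^ 2 = (k ^ 2 * lam) ^ 2 := by ring
    have haabs : |a| < 2 := by
      rw [abs_lt]
      constructor
      · rw [ha, hk4]; nlinarith [sq_nonneg (k ^ 2 * lam + 6)]
      · rw [ha, hk4]
        nlinarith [mul_pos (by linarith : (0:ℝ) < 12 + k ^ 2 * lam)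
          (by linarith : (0:ℝ) < -(k ^ 2 * lam))]
    set E : ℕ → ℝ := fun n => v (n + 1) ^ 2 - a * v (n + 1) * v n + v n ^ 2 with hE
    have hEconst : ∀ n : ℕ, 1 ≤ n → E n = E 1 := by
      intro n hn
      induction n, hn using Nat.le_induction with
      | base => rfl
      | succ m hm ih =>
        have hr := hrec (m + 1) (by omega)
        simp only [Nat.add_sub_cancel] at hr
        rw [← ih]
        simp only [hE]
        rw [hr]
        ring
    have hpos : 0 < 2 - |a| := by linarith
    have hbound : ∀ n : ℕ, 1 ≤ n → v n ^ 2 ≤ 2 * E 1 / (2 - |a|) := by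
      intro n hn
      rw [le_div_iff₀ hpos]
      have h3 : v (n + 1) ^ 2 - a * v (n + 1) * v n + v n ^ 2 = E 1 := hEconst n hn
      rcases abs_cases a with ⟨he, hs⟩ | ⟨he, hs⟩ <;>
        nlinarith [sq_nonneg (v (n + 1) - v n), sq_nonneg (v (n + 1) + v n),
          sq_nonneg (v (n + 1)), sq_nonneg (v n)]
    refine ⟨max (|v 0|) (Real.sqrt (2 * E 1 / (2 - |a|))), fun n => ?_⟩
    rcases Nat.eq_zero_or_pos n with h0 | h1
    · rw [h0]; exact le_max_left _ _
    · refine le_trans ?_ (le_max_right _ _)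
      rw [← Real.sqrt_sq_eq_abs]
      exact Real.sqrt_le_sqrt (hbound n h1)
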